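/- A finite simple graph G admits a tree 3-spanner if and only if every block of G admits a tree 3-spanner. -/

import Mathlib

open SimpleGraph Set Function

namespace Spanner13

variable {V : Type*} {W : Type*}

/-- Existence of a tree 3-spanner. -/
def Spanner {V : Type*} (G : SimpleGraph V) : Prop :=
  ∃ T : SimpleGraph V, T ≤ G ∧ T.IsTree ∧ ∀ x y : V, T.dist x y ≤ 3 * G.dist x y

/-- No cut vertex, phrased on a whole graph. -/
def NoCutOn {W : Type*} (K : SimpleGraph W) : Prop :=
  ∀ v x y : W, x ≠ v → y ≠ v → ∃ p : K.Walk x y, v ∉ p.support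

def IsBlock {V : Type*} (G : SimpleGraph V) (B : Set V) : Prop :=
  (G.induce B).Connected ∧ NoCutOn (G.induce B) ∧
    ∀ B' : Set V, B ⊆ B' → ((G.induce B').Connected ∧ NoCutOn (G.induce B')) → B' = B

section lift

variable {H : SimpleGraph V} {S : Set V} {K : SimpleGraph S}

/-- The inclusion homomorphism. -/
def incl (hK : ∀ a b : S, K.Adj a b → H.Adj ↑a ↑b) : K →g H :=
  ⟨Subtype.val, fun h => hK _ _ h⟩

lemma lift_walk (hK : ∀ a b : S, K.Adj a b ↔ H.Adj ↑a ↑b) :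
    ∀ {p q : V} (w : H.Walk p q) (hp : p ∈ S) (hq : q ∈ S),
      (∀ u ∈ w.support, u ∈ S) →
      ∃ w' : K.Walk ⟨p, hp⟩ ⟨q, hq⟩, w'.map (incl fun a b h => (hK a b).1 h) = w := by
  intro p q w
  induction w with
  | nil => intro hp hq _; exact ⟨.nil, rfl⟩
  | @cons p c q h w ih =>
    intro hp hq hsupp
    have hc : c ∈ S := hsupp c (by simp [SimpleGraph.Walk.support_cons])
    obtain ⟨w', hw'⟩ := ih hc hq (fun u hu => hsupp u (by simp [SimpleGraph.Walk.support_cons, hu]))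
    exact ⟨.cons ((hK ⟨p, hp⟩ ⟨c, hc⟩).2 h) w', by subst hw'; rfl⟩

end lift

section iso

variable {H1 : SimpleGraph V} {H2 : SimpleGraph W}

lemma iso_reachable (e : H1 ≃g H2) {u v : V} (h : H1.Reachable u v) :
    H2.Reachable (e u) (e v) := by
  obtain ⟨w⟩ := h
  exact ⟨w.map e.toHom⟩

lemma iso_connected (e : H1 ≃g H2) (h : H1.Connected) : H2.Connected := by
  have : Nonempty W := ⟨e h.nonempty.some⟩
  refine ⟨fun a b => ?_⟩
  have := iso_reachable e (h.preconnected (e.symm a) (e.symm b))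
  simpa using this

lemma iso_dist_le (e : H1 ≃g H2) (u v : V) : H2.dist (e u) (e v) ≤ H1.dist u v := by
  by_cases h : H1.Reachable u v
  · obtain ⟨w, _, hl⟩ := h.exists_path_of_dist
    calc H2.dist (e u) (e v) ≤ (w.map e.toHom).length := SimpleGraph.dist_le _
    _ = w.length := SimpleGraph.Walk.length_map _ _
    _ = H1.dist u v := hl
  · have h2 : ¬ H2.Reachable (e u) (e v) := by
      intro h2
      have := iso_reachable e.symm h2
      simp only [RelIso.symm_apply_apply] at this
      exact h ((by simpa using this : H1.Reachable u v))
    have : H2.dist (e u) (e v) = 0 :=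
      SimpleGraph.dist_eq_zero_iff_eq_or_not_reachable.2 (Or.inr h2)
    omega

lemma iso_dist (e : H1 ≃g H2) (u v : V) : H2.dist (e u) (e v) = H1.dist u v := by
  refine le_antisymm (iso_dist_le e u v) ?_
  have := iso_dist_le e.symm (e u) (e v)
  simpa using this

lemma iso_acyclic (e : H1 ≃g H2) (h : H1.IsAcyclic) : H2.IsAcyclic := by
  intro v c hc
  exact h ((c.map e.symm.toHom)) (hc.map e.symm.injective)

lemma iso_isTree (e : H1 ≃g H2) (h : H1.IsTree) : H2.IsTree :=
  ⟨iso_connected e h.1, iso_acyclic e h.2⟩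

lemma iso_spanner (e : H1 ≃g H2) (h : Spanner H1) : Spanner H2 := by
  classical
  obtain ⟨T, hle, htree, hdist⟩ := h
  let f : W → V := fun w => e.symm w
  let T2 : SimpleGraph W := T.comap f
  have hadj : ∀ {a b : V}, T2.Adj (e.toEquiv a) (e.toEquiv b) ↔ T.Adj a b := by
    intro a b
    show T.Adj (e.symm (e a)) (e.symm (e b)) ↔ T.Adj a b
    simp
  let eT : T ≃g T2 := ⟨e.toEquiv, hadj⟩
  have heT : ∀ z, eT z = e z := fun z => by
    rw [← RelIso.coe_fn_toEquiv, ← RelIso.coe_fn_toEquiv]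
  refine ⟨T2, fun a b hab => ?_, iso_isTree eT htree, fun x y => ?_⟩
  · have h1 : H1.Adj (e.symm a) (e.symm b) := hle hab
    have h2 := e.symm.symm.map_adj_iff.2 h1
    simpa using h2
  · have h1 : T2.dist x y = T.dist (e.symm x) (e.symm y) := by
      have := iso_dist eT (e.symm x) (e.symm y)
      rw [heT, heT] at this
      simpa using this
    have h2 : H2.dist x y = H1.dist (e.symm x) (e.symm y) := by
      have := iso_dist e.symm x y
      simp [this]
    rw [h1, h2]
    exact hdist _ _

end iso

section isoTwo

variable {H1 : SimpleGraph V} {H2 : SimpleGraph W}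

lemma iso_noCutOn (e : H1 ≃g H2) (h : NoCutOn H1) : NoCutOn H2 := by
  intro v x y hx hy
  obtain ⟨p, hp⟩ := h (e.symm v) (e.symm x) (e.symm y)
    (fun hh => hx (by simpa using congrArg e hh))
    (fun hh => hy (by simpa using congrArg e hh))
  refine ⟨(p.map e.toHom).copy (by simp) (by simp), ?_⟩
  rw [SimpleGraph.Walk.support_copy, SimpleGraph.Walk.support_map]
  intro hv
  obtain ⟨u, hu, hue⟩ := List.mem_map.1 hv
  apply hp
  have : u = e.symm v := by
    have := congrArg e.symm hue
    simpa using this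
  rwa [← this]

/-- The canonical isomorphism between an induced subgraph of an induced subgraph
and the induced subgraph on the image. -/
noncomputable def induceInduce (G : SimpleGraph V) (S : Set V) (s : Set S) :
    (G.induce S).induce s ≃g G.induce (Subtype.val '' s) := by
  refine ⟨Equiv.Set.image Subtype.val s Subtype.val_injective, ?_⟩
  rintro ⟨⟨x, hxS⟩, hxs⟩ ⟨⟨y, hyS⟩, hys⟩
  simp [Equiv.Set.image, Equiv.Set.imageOfInjOn]

end isoTwo

section side

variable {G : SimpleGraph V} {v : V} {S : Set V}

lemma induce_adj_iff (G : SimpleGraph V) (S : Set V) :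
    ∀ a b : S, (G.induce S).Adj a b ↔ G.Adj ↑a ↑b := fun _ _ => Iff.rfl

structure Side (G : SimpleGraph V) (v : V) (S : Set V) : Prop where
  hv : v ∈ S
  conn : (G.induce S).Connected
  cross : ∀ ⦃p q : V⦄ (w : G.Walk p q), p ∈ S → q ∉ S → v ∈ w.support
  two : ∃ a, a ∈ S ∧ a ≠ v
  ne_univ : ∃ b, b ∉ S

lemma stays_of_cross {H : SimpleGraph V} (hv : v ∈ S)
    (hcross : ∀ ⦃p q : V⦄ (w : H.Walk p q), p ∈ S → q ∉ S → v ∈ w.support)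
    {p q : V} (w : H.Walk p q) (hw : w.IsPath)
    (hp : p ∈ S) (hq : q ∈ S) : ∀ u ∈ w.support, u ∈ S := by
  classical
  intro u hu
  by_contra huS
  have h1 : v ∈ (w.takeUntil u hu).support := hcross _ hp huS
  have h2 : v ∈ (w.dropUntil u hu).support := by
    have := hcross (w.dropUntil u hu).reverse hq huS
    rwa [SimpleGraph.Walk.support_reverse, List.mem_reverse] at this
  have hnd : ((w.takeUntil u hu).append (w.dropUntil u hu)).support.Nodup := by
    rw [SimpleGraph.Walk.take_spec]
    exact hw.support_nodup
  rw [SimpleGraph.Walk.support_append] at hnd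
  have hvu : v ≠ u := fun hh => huS (hh ▸ hv)
  have h2' : v ∈ (w.dropUntil u hu).support.tail := by
    have h2b := h2
    rw [(w.dropUntil u hu).support_eq_cons, List.mem_cons] at h2b
    rcases h2b with h | h
    · exact absurd h hvu
    · exact h
  exact (List.disjoint_of_nodup_append hnd) h1 h2'

lemma Side.stays (hS : Side G v S) {p q : V} (w : G.Walk p q) (hw : w.IsPath)
    (hp : p ∈ S) (hq : q ∈ S) : ∀ u ∈ w.support, u ∈ S :=
  stays_of_cross hS.hv hS.cross w hw hp hq

lemma Side.dist_le (hS : Side G v S) (hG : G.Connected) {p q : V} (hp : p ∈ S) (hq : q ∈ S) :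
    (G.induce S).dist ⟨p, hp⟩ ⟨q, hq⟩ ≤ G.dist p q := by
  obtain ⟨w, hw, hl⟩ := (hG.preconnected p q).exists_path_of_dist
  obtain ⟨w', hw'⟩ := lift_walk (induce_adj_iff G S) w hp hq (hS.stays w hw hp hq)
  calc (G.induce S).dist ⟨p, hp⟩ ⟨q, hq⟩ ≤ w'.length := SimpleGraph.dist_le _
  _ = w.length := by rw [← hw']; exact (SimpleGraph.Walk.length_map _ _).symm
  _ = G.dist p q := hl

lemma Side.dist_add (hS : Side G v S) (hG : G.Connected) {p q : V} (hp : p ∈ S) (hq : q ∉ S) :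
    G.dist p v + G.dist v q ≤ G.dist p q := by
  classical
  obtain ⟨w, hw, hl⟩ := (hG.preconnected p q).exists_path_of_dist
  have hv : v ∈ w.support := hS.cross w hp hq
  calc G.dist p v + G.dist v q ≤ (w.takeUntil v hv).length + (w.dropUntil v hv).length :=
        Nat.add_le_add (SimpleGraph.dist_le _) (SimpleGraph.dist_le _)
  _ = w.length := by
      rw [← SimpleGraph.Walk.length_append, SimpleGraph.Walk.take_spec]
  _ = G.dist p q := hl

lemma Side.block_avoid (hS : Side G v S) {B : Set V}
    (hconn : (G.induce B).Connected) (hnc : NoCutOn (G.induce B)) {a b : V}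
    (ha : a ∈ B) (hb : b ∈ B) (haS : a ∈ S) (hav : a ≠ v) (hbS : b ∉ S) : False := by
  by_cases hvB : v ∈ B
  · obtain ⟨p, hp⟩ := hnc ⟨v, hvB⟩ ⟨a, ha⟩ ⟨b, hb⟩
      (fun hh => hav (congrArg Subtype.val hh))
      (fun hh => hbS (by rw [show b = v from congrArg Subtype.val hh]; exact hS.hv))
    have hv : v ∈ (p.map (incl fun a b h => ((induce_adj_iff G B) a b).1 h)).support :=
      hS.cross _ haS hbS
    rw [SimpleGraph.Walk.support_map] at hv
    obtain ⟨u, hu, hue⟩ := List.mem_map.1 hv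
    exact hp (by rwa [show u = ⟨v, hvB⟩ from Subtype.ext hue] at hu)
  · obtain ⟨p⟩ := hconn.preconnected ⟨a, ha⟩ ⟨b, hb⟩
    have hv : v ∈ (p.map (incl fun a b h => ((induce_adj_iff G B) a b).1 h)).support :=
      hS.cross _ haS hbS
    rw [SimpleGraph.Walk.support_map] at hv
    obtain ⟨u, _, hue⟩ := List.mem_map.1 hv
    exact hvB (hue ▸ u.2)

lemma Side.cross_le (hS : Side G v S) {T : SimpleGraph V} (hTG : T ≤ G) {p q : V}
    (w : T.Walk p q) (hp : p ∈ S) (hq : q ∉ S) : v ∈ w.support := by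
  have := hS.cross (w.map (SimpleGraph.Hom.ofLE hTG)) hp hq
  rw [SimpleGraph.Walk.support_map, SimpleGraph.Hom.coe_ofLE, List.map_id] at this
  exact this

lemma proj_dist_le {H : SimpleGraph V} {S : Set V} {K : SimpleGraph S}
    (hK : ∀ a b : S, K.Adj a b ↔ H.Adj ↑a ↑b) {p q : S} (hc : K.Reachable p q) :
    H.dist ↑p ↑q ≤ K.dist p q := by
  obtain ⟨w, _, hl⟩ := hc.exists_path_of_dist
  calc H.dist ↑p ↑q ≤ (w.map (incl fun a b h => (hK a b).1 h)).length := SimpleGraph.dist_le _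
  _ = w.length := SimpleGraph.Walk.length_map _ _
  _ = K.dist p q := hl

lemma image_preimage {S : Set V} {B : Set V} (hBS : B ⊆ S) :
    Subtype.val '' (Subtype.val ⁻¹' B : Set S) = B := by
  rw [Subtype.image_preimage_coe]
  exact Set.inter_eq_self_of_subset_right hBS

lemma IsBlock.nontrivial {G : SimpleGraph V} (hG : G.Connected) (hW : ∃ a b : V, a ≠ b)
    {B : Set V} (hB : IsBlock G B) : ∃ a b, a ∈ B ∧ b ∈ B ∧ a ≠ b := by
  obtain ⟨⟨a, haB⟩⟩ := hB.1.nonempty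
  by_contra hcon
  push_neg at hcon
  obtain ⟨x, y, hxy⟩ := hW
  have hc : ∃ c, G.Adj a c := by
    rcases eq_or_ne a x with rfl | h
    · obtain ⟨w⟩ := hG.preconnected a y
      cases w with
      | nil => exact absurd rfl hxy
      | cons h w => exact ⟨_, h⟩
    · obtain ⟨w⟩ := hG.preconnected a x
      cases w with
      | nil => exact absurd rfl h
      | cons h w => exact ⟨_, h⟩
  obtain ⟨b, hab⟩ := hc
  have hba : b ≠ a := hab.ne'
  have hmem : ∀ z : ↥({a, b} : Set V), z = ⟨a, by simp⟩ ∨ z = ⟨b, by simp⟩ := by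
    rintro ⟨z, hz⟩
    rcases hz with rfl | hz
    · exact Or.inl rfl
    · exact Or.inr (Subtype.ext hz)
  have hconn : (G.induce ({a, b} : Set V)).Connected := by
    have : Nonempty ↥({a, b} : Set V) := ⟨⟨a, by simp⟩⟩
    refine ⟨fun z w => ?_⟩
    have hadj : (G.induce ({a, b} : Set V)).Adj ⟨a, by simp⟩ ⟨b, by simp⟩ := hab
    rcases hmem z with rfl | rfl <;> rcases hmem w with rfl | rfl
    · rfl
    · exact hadj.reachable
    · exact hadj.symm.reachable
    · rfl
  have hnc : NoCutOn (G.induce ({a, b} : Set V)) := by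
    rintro u z w hzu hwu
    rcases hmem z with rfl | rfl <;> rcases hmem w with rfl | rfl <;> rcases hmem u with rfl | rfl
    · exact absurd rfl hzu
    · exact ⟨SimpleGraph.Walk.nil, by simp; exact fun hh => hzu (Subtype.ext hh.symm)⟩
    · exact absurd rfl hzu
    · exact absurd rfl hwu
    · exact absurd rfl hwu
    · exact absurd rfl hzu
    · exact ⟨SimpleGraph.Walk.nil, by simp; exact fun hh => hzu (Subtype.ext hh.symm)⟩
    · exact absurd rfl hzu
  have hsub : B ⊆ {a, b} := by
    intro e heB
    have : e = a := hcon e a heB haB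
    simp [this]
  have heq : ({a, b} : Set V) = B := hB.2.2 _ hsub ⟨hconn, hnc⟩
  have hbB : b ∈ B := by rw [← heq]; simp
  exact hba (hcon b a hbB haB)

lemma block_down (hS : Side G v S) {B : Set V} (hBS : B ⊆ S) (hB : IsBlock G B) :
    IsBlock (G.induce S) (Subtype.val ⁻¹' B) := by
  have himg : Subtype.val '' (Subtype.val ⁻¹' B : Set S) = B := image_preimage hBS
  refine ⟨?_, ?_, ?_⟩
  · apply iso_connected (induceInduce G S _).symm
    rw [himg]
    exact hB.1
  · apply iso_noCutOn (induceInduce G S _).symm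
    rw [himg]
    exact hB.2.1
  · intro s3 hsub hcn3
    obtain ⟨hc3, hn3⟩ := hcn3
    have hcg : (G.induce (Subtype.val '' s3)).Connected := iso_connected (induceInduce G S s3) hc3
    have hng : NoCutOn (G.induce (Subtype.val '' s3)) := iso_noCutOn (induceInduce G S s3) hn3
    have hB3 : Subtype.val '' s3 = B :=
      hB.2.2 _ (by rw [← himg]; exact Set.image_mono hsub) ⟨hcg, hng⟩
    refine Set.eq_of_subset_of_subset (fun u hu => ?_) hsub
    show (u : V) ∈ B
    rw [← hB3]
    exact Set.mem_image_of_mem _ hu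

lemma block_up (hS : Side G v S) {s : Set ↥S} (hs : IsBlock (G.induce S) s) :
    IsBlock G (Subtype.val '' s) := by
  refine ⟨iso_connected (induceInduce G S s) hs.1, iso_noCutOn (induceInduce G S s) hs.2.1, ?_⟩
  intro B3 hsub hcn3
  obtain ⟨hc3, hn3⟩ := hcn3
  have h2 : ∃ a b : ↥S, a ≠ b := by
    obtain ⟨a, haS, hav⟩ := hS.two
    exact ⟨⟨a, haS⟩, ⟨v, hS.hv⟩, fun hh => hav (congrArg Subtype.val hh)⟩
  obtain ⟨a, b, haB, hbB, hab⟩ := IsBlock.nontrivial hS.conn h2 hs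
  have hex : ∃ c : ↥S, c ∈ s ∧ (c : V) ≠ v := by
    by_cases hva : (a : V) = v
    · refine ⟨b, hbB, fun hh => hab (Subtype.ext ?_)⟩
      rw [hva, ← hh]
    · exact ⟨a, haB, hva⟩
  obtain ⟨c, hcs, hcv⟩ := hex
  have hB3S : B3 ⊆ S := by
    intro u hu
    by_contra huS
    exact hS.block_avoid hc3 hn3 (hsub (Set.mem_image_of_mem _ hcs)) hu c.2 hcv huS
  have hs3 : s ⊆ Subtype.val ⁻¹' B3 := fun u hu => hsub (Set.mem_image_of_mem _ hu)
  have himg : Subtype.val '' (Subtype.val ⁻¹' B3 : Set ↥S) = B3 := image_preimage hB3S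
  have hc' : ((G.induce S).induce (Subtype.val ⁻¹' B3 : Set ↥S)).Connected := by
    have h0 := hc3
    rw [← himg] at h0
    exact iso_connected (induceInduce G S _).symm h0
  have hn' : NoCutOn ((G.induce S).induce (Subtype.val ⁻¹' B3 : Set ↥S)) := by
    have h0 := hn3
    rw [← himg] at h0
    exact iso_noCutOn (induceInduce G S _).symm h0
  have hpre : Subtype.val ⁻¹' B3 = s := hs.2.2 _ hs3 ⟨hc', hn'⟩
  rw [← himg, hpre]

lemma spanner_restrict (hS : Side G v S) (hG : G.Connected) (h : Spanner G) :
    Spanner (G.induce S) := by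
  obtain ⟨T, hTG, hTree, hTd⟩ := h
  obtain ⟨hTc, hTa⟩ := hTree
  let K : SimpleGraph ↥S := T.induce S
  have hK : ∀ a b : ↥S, K.Adj a b ↔ T.Adj ↑a ↑b := fun _ _ => Iff.rfl
  have hTcross : ∀ ⦃p q : V⦄ (w : T.Walk p q), p ∈ S → q ∉ S → v ∈ w.support :=
    fun p q w hp hq => hS.cross_le hTG w hp hq
  have hNe : Nonempty ↥S := ⟨⟨v, hS.hv⟩⟩
  have hreach : ∀ (p q : V) (hp : p ∈ S) (hq : q ∈ S),
      ∃ w' : K.Walk ⟨p, hp⟩ ⟨q, hq⟩, w'.length = T.dist p q := by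
    intro p q hp hq
    obtain ⟨w, hw, hl⟩ := (hTc.preconnected p q).exists_path_of_dist
    obtain ⟨w', hw'⟩ := lift_walk hK w hp hq (stays_of_cross hS.hv hTcross w hw hp hq)
    refine ⟨w', ?_⟩
    rw [← hl, ← hw']; exact (SimpleGraph.Walk.length_map _ _).symm
  refine ⟨K, fun a b hab => hTG hab, ⟨⟨?_⟩, ?_⟩, ?_⟩
  · rintro ⟨p, hp⟩ ⟨q, hq⟩
    obtain ⟨w', _⟩ := hreach p q hp hq
    exact ⟨w'⟩
  · intro u c hc
    exact hTa _ (hc.map (f := incl fun a b h => h) Subtype.val_injective)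
  · rintro ⟨p, hp⟩ ⟨q, hq⟩
    obtain ⟨w', hw'⟩ := hreach p q hp hq
    have h1 : K.dist ⟨p, hp⟩ ⟨q, hq⟩ ≤ T.dist p q := by
      rw [← hw']; exact SimpleGraph.dist_le _
    have h2 : T.dist p q ≤ 3 * G.dist p q := hTd p q
    have h3 : G.dist p q ≤ (G.induce S).dist ⟨p, hp⟩ ⟨q, hq⟩ :=
      proj_dist_le (induce_adj_iff G S) (hS.conn.preconnected ⟨p, hp⟩ ⟨q, hq⟩)
    omega

lemma glue {A Bst : Set V} (hA : Side G v A) (hB : Side G v Bst)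
    (hcover : ∀ u : V, u ∈ A ∨ u ∈ Bst) (hinter : ∀ u, u ∈ A → u ∈ Bst → u = v)
    (hG : G.Connected) (sA : Spanner (G.induce A)) (sB : Spanner (G.induce Bst)) :
    Spanner G := by
  classical
  obtain ⟨T₁, hT1le, ⟨hT1c, hT1a⟩, hT1d⟩ := sA
  obtain ⟨T₂, hT2le, ⟨hT2c, hT2a⟩, hT2d⟩ := sB
  let T : SimpleGraph V :=
    { Adj := fun a b => (∃ (ha : a ∈ A) (hb : b ∈ A), T₁.Adj ⟨a, ha⟩ ⟨b, hb⟩) ∨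
        (∃ (ha : a ∈ Bst) (hb : b ∈ Bst), T₂.Adj ⟨a, ha⟩ ⟨b, hb⟩)
      symm := by
        constructor
        rintro a b (⟨ha, hb, h⟩ | ⟨ha, hb, h⟩)
        exacts [Or.inl ⟨hb, ha, h.symm⟩, Or.inr ⟨hb, ha, h.symm⟩]
      loopless := by
        constructor
        rintro a (⟨ha, hb, h⟩ | ⟨ha, hb, h⟩) <;> exact h.ne (Subtype.ext rfl) }
  have hKA : ∀ a b : ↥A, T₁.Adj a b ↔ T.Adj ↑a ↑b := by
    rintro ⟨a, ha⟩ ⟨b, hb⟩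
    constructor
    · intro h
      exact Or.inl ⟨ha, hb, h⟩
    · rintro (⟨ha', hb', h⟩ | ⟨ha', hb', h⟩)
      · exact h
      · have hav : a = v := hinter _ ha ha'
        have hbv : b = v := hinter _ hb hb'
        subst hav
        subst hbv
        exact absurd rfl h.ne
  have hKB : ∀ a b : ↥Bst, T₂.Adj a b ↔ T.Adj ↑a ↑b := by
    rintro ⟨a, ha⟩ ⟨b, hb⟩
    constructor
    · intro h
      exact Or.inr ⟨ha, hb, h⟩
    · rintro (⟨ha', hb', h⟩ | ⟨ha', hb', h⟩)
      · have hav : a = v := hinter _ ha' ha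
        have hbv : b = v := hinter _ hb' hb
        subst hav
        subst hbv
        exact absurd rfl h.ne
      · exact h
  have hTle : T ≤ G := by
    rintro a b (⟨ha, hb, h⟩ | ⟨ha, hb, h⟩)
    · exact hT1le h
    · exact hT2le h
  have hTcrossA : ∀ ⦃p q : V⦄ (w : T.Walk p q), p ∈ A → q ∉ A → v ∈ w.support := by
    intro p q w
    induction w with
    | nil => intro hp hq; exact absurd hp hq
    | @cons p c q h w ih =>
      intro hp hq
      by_cases hpv : p = v
      · subst hpv
        exact SimpleGraph.Walk.start_mem_support _
      · rcases h with ⟨ha, hb, _⟩ | ⟨ha, hb, _⟩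
        · rw [SimpleGraph.Walk.support_cons]
          exact List.mem_cons_of_mem _ (ih hb hq)
        · exact absurd (hinter p hp ha) hpv
  have hTcrossB : ∀ ⦃p q : V⦄ (w : T.Walk p q), p ∈ Bst → q ∉ Bst → v ∈ w.support := by
    intro p q w hp hq
    have hqA : q ∈ A := (hcover q).resolve_right hq
    by_cases hpv : p = v
    · subst hpv
      exact SimpleGraph.Walk.start_mem_support _
    · have hpA : p ∉ A := fun hpA => hpv (hinter p hpA hp)
      have := hTcrossA w.reverse hqA hpA
      rwa [SimpleGraph.Walk.support_reverse, List.mem_reverse] at this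
  have hreachv : ∀ u : V, T.Reachable u v := by
    intro u
    rcases hcover u with hu | hu
    · obtain ⟨p⟩ := hT1c.preconnected ⟨u, hu⟩ ⟨v, hA.hv⟩
      exact ⟨p.map (incl fun a b h => (hKA a b).1 h)⟩
    · obtain ⟨p⟩ := hT2c.preconnected ⟨u, hu⟩ ⟨v, hB.hv⟩
      exact ⟨p.map (incl fun a b h => (hKB a b).1 h)⟩
  have hTconn : T.Connected := by
    have : Nonempty V := hG.nonempty
    exact ⟨fun a b => (hreachv a).trans (hreachv b).symm⟩
  have hTacyclic : T.IsAcyclic := by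
    intro u c hc
    by_cases hallA : ∀ z ∈ c.support, z ∈ A
    · have hu : u ∈ A := hallA u (SimpleGraph.Walk.start_mem_support _)
      obtain ⟨c', hc'⟩ := lift_walk hKA c hu hu hallA
      rw [← hc'] at hc
      exact hT1a _ ((SimpleGraph.Walk.map_isCycle_iff_of_injective
        (fun x y h => Subtype.val_injective h)).1 hc)
    · by_cases hallB : ∀ z ∈ c.support, z ∈ Bst
      · have hu : u ∈ Bst := hallB u (SimpleGraph.Walk.start_mem_support _)
        obtain ⟨c', hc'⟩ := lift_walk hKB c hu hu hallB
        rw [← hc'] at hc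
        exact hT2a _ ((SimpleGraph.Walk.map_isCycle_iff_of_injective
          (fun x y h => Subtype.val_injective h)).1 hc)
      · push_neg at hallA hallB
        obtain ⟨b, hbsupp, hbA⟩ := hallA
        obtain ⟨a, hasupp, haB⟩ := hallB
        have haA : a ∈ A := (hcover a).resolve_right haB
        have hav : a ≠ v := fun hh => haB (hh ▸ hB.hv)
        have hbB : b ∈ Bst := (hcover b).resolve_left hbA
        have hbv : b ≠ v := fun hh => hbA (hh ▸ hA.hv)
        have hc2 := hc.rotate hasupp
        have hbt : b ∈ c.support.tail := by
          cases c with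
          | nil => exact absurd rfl hc.ne_nil
          | cons h w =>
            rw [SimpleGraph.Walk.support_cons, List.mem_cons] at hbsupp
            rw [SimpleGraph.Walk.support_cons, List.tail_cons]
            rcases hbsupp with rfl | hmem
            · exact SimpleGraph.Walk.end_mem_support w
            · exact hmem
        have hbt2 : b ∈ (c.rotate a hasupp).support.tail :=
          ((SimpleGraph.Walk.support_rotate c a hasupp).mem_iff).2 hbt
        have hbsupp2 : b ∈ (c.rotate a hasupp).support := List.mem_of_mem_tail hbt2
        set c2 := c.rotate a hasupp with hc2def
        have hv1 : v ∈ (c2.takeUntil b hbsupp2).support := hTcrossA _ haA hbA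
        have hv2 : v ∈ (c2.dropUntil b hbsupp2).support := hTcrossB _ hbB haB
        have hnd : c2.support.tail.Nodup := hc2.2
        have hsupp : c2.support
            = (c2.takeUntil b hbsupp2).support ++ (c2.dropUntil b hbsupp2).support.tail := by
          rw [← SimpleGraph.Walk.support_append, SimpleGraph.Walk.take_spec]
        rw [hsupp, List.tail_append_of_ne_nil (SimpleGraph.Walk.support_ne_nil _)] at hnd
        have hv1t : v ∈ (c2.takeUntil b hbsupp2).support.tail := by
          have := hv1
          rw [(c2.takeUntil b hbsupp2).support_eq_cons, List.mem_cons] at this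
          rcases this with hh | hh
          · exact absurd hh.symm hav
          · exact hh
        have hv2t : v ∈ (c2.dropUntil b hbsupp2).support.tail := by
          have := hv2
          rw [(c2.dropUntil b hbsupp2).support_eq_cons, List.mem_cons] at this
          rcases this with hh | hh
          · exact absurd hh.symm hbv
          · exact hh
        exact (List.disjoint_of_nodup_append hnd) hv1t hv2t
  have hdA : ∀ (p q : V) (hp : p ∈ A) (hq : q ∈ A), T.dist p q ≤ 3 * G.dist p q := by
    intro p q hp hq
    have h1 : T.dist p q ≤ T₁.dist ⟨p, hp⟩ ⟨q, hq⟩ :=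
      proj_dist_le hKA (hT1c.preconnected ⟨p, hp⟩ ⟨q, hq⟩)
    have h2 := hT1d ⟨p, hp⟩ ⟨q, hq⟩
    have h3 := hA.dist_le hG hp hq
    omega
  have hdB : ∀ (p q : V) (hp : p ∈ Bst) (hq : q ∈ Bst), T.dist p q ≤ 3 * G.dist p q := by
    intro p q hp hq
    have h1 : T.dist p q ≤ T₂.dist ⟨p, hp⟩ ⟨q, hq⟩ :=
      proj_dist_le hKB (hT2c.preconnected ⟨p, hp⟩ ⟨q, hq⟩)
    have h2 := hT2d ⟨p, hp⟩ ⟨q, hq⟩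
    have h3 := hB.dist_le hG hp hq
    omega
  refine ⟨T, hTle, ⟨hTconn, hTacyclic⟩, ?_⟩
  intro x y
  by_cases hx : x ∈ A
  · by_cases hy : y ∈ A
    · exact hdA x y hx hy
    · have hyB : y ∈ Bst := (hcover y).resolve_left hy
      have ht := hTconn.dist_triangle (u := x) (v := v) (w := y)
      have h1 := hdA x v hx hA.hv
      have h2 := hdB v y hB.hv hyB
      have h3 := hA.dist_add hG hx hy
      omega
  · have hxB : x ∈ Bst := (hcover x).resolve_left hx
    by_cases hy : y ∈ Bst
    · exact hdB x y hxB hy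
    · have hyA : y ∈ A := (hcover y).resolve_right hy
      have ht := hTconn.dist_triangle (u := x) (v := v) (w := y)
      have h1 := hdB x v hxB hB.hv
      have h2 := hdA v y hA.hv hyA
      have h3 := hB.dist_add hG hxB hy
      omega

end side

section cut

variable {G : SimpleGraph V}

lemma exists_adj_end : ∀ {s t : V} (w : G.Walk s t), s ≠ t →
    ∃ z, G.Adj z t ∧ ∃ w2 : G.Walk s z, t ∉ w2.support := by
  intro s t w
  induction w with
  | nil => intro h; exact absurd rfl h
  | @cons s c t h w ih =>
    intro hst
    by_cases hc : c = t
    · subst hc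
      exact ⟨s, h, SimpleGraph.Walk.nil, by simp; exact fun hh => hst hh.symm⟩
    · obtain ⟨z, hz, w2, hw2⟩ := ih hc
      refine ⟨z, hz, SimpleGraph.Walk.cons h w2, ?_⟩
      rw [SimpleGraph.Walk.support_cons, List.mem_cons]
      rintro (rfl | hh)
      · exact hst rfl
      · exact hw2 hh

lemma sides_of_cut (hG : G.Connected) {v x y : V} (hxv : x ≠ v) (hyv : y ≠ v)
    (hcut : ∀ w : G.Walk x y, v ∈ w.support) :
    ∃ A Bst : Set V, Side G v A ∧ Side G v Bst ∧ (∀ u, u ∈ A ∨ u ∈ Bst) ∧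
      (∀ u, u ∈ A → u ∈ Bst → u = v) := by
  classical
  set R : V → Prop := fun u => ∃ w : G.Walk x u, v ∉ w.support with hR
  set A : Set V := {u | u = v ∨ R u} with hAdef
  set Bst : Set V := {u | u = v ∨ ¬ R u} with hBdef
  have hvA : v ∈ A := Or.inl rfl
  have hvB : v ∈ Bst := Or.inl rfl
  have hRx : R x := ⟨SimpleGraph.Walk.nil, by simp; exact fun h => hxv h.symm⟩
  have hxA : x ∈ A := Or.inr hRx
  have hnRy : ¬ R y := fun hh => hh.elim fun w hw => hw (hcut w)
  have hyB : y ∈ Bst := Or.inr hnRy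
  have hyA : y ∉ A := by rintro (rfl | hh); exacts [hyv rfl, hnRy hh]
  have hxB : x ∉ Bst := by rintro (rfl | hh); exacts [hxv rfl, hh hRx]
  have hsuppA : ∀ {u : V} (w : G.Walk x u), v ∉ w.support → ∀ t ∈ w.support, t ∈ A := by
    intro u w hw t ht
    exact Or.inr ⟨w.takeUntil t ht, fun hv => hw (w.support_takeUntil_subset ht hv)⟩
  have crossA : ∀ ⦃p q : V⦄ (w : G.Walk p q), p ∈ A → q ∉ A → v ∈ w.support := by
    intro p q w
    induction w with
    | nil => intro hp hq; exact absurd hp hq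
    | @cons p c q h w ih =>
      intro hp hq
      by_cases hpv : p = v
      · subst hpv; exact SimpleGraph.Walk.start_mem_support _
      · have hRp : R p := hp.resolve_left hpv
        by_cases hcv : c = v
        · subst hcv
          exact List.mem_cons_of_mem _ (SimpleGraph.Walk.start_mem_support w)
        · have hRc : R c := by
            obtain ⟨wp, hwp⟩ := hRp
            refine ⟨wp.concat h, ?_⟩
            rw [SimpleGraph.Walk.support_concat]
            intro hh
            rcases (by simpa using hh : v ∈ wp.support ∨ v = c) with hh2 | hh2
            · exact hwp hh2
            · exact hcv hh2.symm
          exact List.mem_cons_of_mem _ (ih (Or.inr hRc) hq)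
  have crossB : ∀ ⦃p q : V⦄ (w : G.Walk p q), p ∈ Bst → q ∉ Bst → v ∈ w.support := by
    intro p q w hp hq
    have hq' : q ≠ v ∧ R q := by
      rw [hBdef] at hq
      simp only [Set.mem_setOf_eq] at hq
      push_neg at hq
      exact ⟨hq.1, hq.2⟩
    by_cases hpv : p = v
    · subst hpv; exact SimpleGraph.Walk.start_mem_support _
    · have hnRp : ¬ R p := hp.resolve_left hpv
      have hpA : p ∉ A := by rintro (rfl | hh); exacts [hpv rfl, hnRp hh]
      have := crossA w.reverse (Or.inr hq'.2) hpA
      rwa [SimpleGraph.Walk.support_reverse, List.mem_reverse] at this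
  have hconnA : (G.induce A).Connected := by
    have hNe : Nonempty ↥A := ⟨⟨v, hvA⟩⟩
    have hxr : ∀ (u) (hu : u ∈ A), u ≠ v → (G.induce A).Reachable ⟨u, hu⟩ ⟨x, hxA⟩ := by
      intro u hu huv
      obtain ⟨w, hw⟩ := hu.resolve_left huv
      obtain ⟨w', _⟩ := lift_walk (induce_adj_iff G A) w hxA (hsuppA w hw u w.end_mem_support)
        (hsuppA w hw)
      exact ⟨w'.reverse⟩
    have hvr : (G.induce A).Reachable ⟨v, hvA⟩ ⟨x, hxA⟩ := by
      obtain ⟨w0⟩ := hG.preconnected x v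
      obtain ⟨z, hzadj, w2, hw2⟩ := exists_adj_end w0 hxv
      have hzA : z ∈ A := hsuppA w2 hw2 z w2.end_mem_support
      obtain ⟨w2', _⟩ := lift_walk (induce_adj_iff G A) w2 hxA hzA (hsuppA w2 hw2)
      exact (SimpleGraph.Adj.reachable
        (show (G.induce A).Adj ⟨v, hvA⟩ ⟨z, hzA⟩ from hzadj.symm)).trans ⟨w2'.reverse⟩
    refine ⟨fun a b => ?_⟩
    rcases a with ⟨a, ha⟩
    rcases b with ⟨b, hb⟩
    have ra : ∀ (u) (hu : u ∈ A), (G.induce A).Reachable ⟨u, hu⟩ ⟨x, hxA⟩ := by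
      intro u hu
      by_cases huv : u = v
      · subst huv; exact hvr
      · exact hxr u hu huv
    exact (ra a ha).trans (ra b hb).symm
  have hconnB : (G.induce Bst).Connected := by
    have hNe : Nonempty ↥Bst := ⟨⟨v, hvB⟩⟩
    have hbr : ∀ (u) (hu : u ∈ Bst), (G.induce Bst).Reachable ⟨u, hu⟩ ⟨v, hvB⟩ := by
      intro u hu
      by_cases huv : u = v
      · subst huv; exact Reachable.refl _
      · have hnRu : ¬ R u := hu.resolve_left huv
        obtain ⟨wb⟩ := hG.preconnected u x
        have hvmem : v ∈ wb.support := by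
          have huA : u ∉ A := by rintro (rfl | hh); exacts [huv rfl, hnRu hh]
          have := crossA wb.reverse hxA huA
          rwa [SimpleGraph.Walk.support_reverse, List.mem_reverse] at this
        have hcount := wb.count_support_takeUntil_eq_one hvmem
        set w1 := wb.takeUntil v hvmem with hw1def
        have hsupp1 : ∀ t ∈ w1.support, t ∈ Bst := by
          intro t ht
          by_cases htv : t = v
          · subst htv; exact hvB
          · refine Or.inr fun hRt => ?_
            have hvnot : v ∉ (w1.takeUntil t ht).support := by
              intro hvin
              have hsplit : w1.support
                  = (w1.takeUntil t ht).support ++ (w1.dropUntil t ht).support.tail := by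
                rw [← SimpleGraph.Walk.support_append, SimpleGraph.Walk.take_spec]
              have hvdrop : v ∈ (w1.dropUntil t ht).support.tail := by
                have hvd : v ∈ (w1.dropUntil t ht).support :=
                  SimpleGraph.Walk.end_mem_support _
                rw [(w1.dropUntil t ht).support_eq_cons, List.mem_cons] at hvd
                rcases hvd with hh | hh
                · exact absurd hh.symm htv
                · exact hh
              have hc1 : 0 < List.count v (w1.takeUntil t ht).support :=
                List.count_pos_iff.2 hvin
              have hc2 : 0 < List.count v (w1.dropUntil t ht).support.tail :=
                List.count_pos_iff.2 hvdrop
              have : List.count v w1.support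
                  = List.count v (w1.takeUntil t ht).support
                    + List.count v (w1.dropUntil t ht).support.tail := by
                rw [hsplit, List.count_append]
              omega
            obtain ⟨wt, hwt⟩ := hRt
            refine hnRu ⟨wt.append (w1.takeUntil t ht).reverse, ?_⟩
            rw [SimpleGraph.Walk.support_append, List.mem_append]
            rintro (hh | hh)
            · exact hwt hh
            · refine hvnot ?_
              rw [SimpleGraph.Walk.support_reverse] at hh
              exact List.mem_reverse.1 (List.mem_of_mem_tail hh)
        obtain ⟨w1', _⟩ := lift_walk (induce_adj_iff G Bst) w1 hu hvB hsupp1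
        exact ⟨w1'⟩
    refine ⟨fun a b => ?_⟩
    rcases a with ⟨a, ha⟩
    rcases b with ⟨b, hb⟩
    exact (hbr a ha).trans (hbr b hb).symm
  refine ⟨A, Bst, ⟨hvA, hconnA, crossA, ⟨x, hxA, hxv⟩, ⟨y, hyA⟩⟩,
    ⟨hvB, hconnB, crossB, ⟨y, hyB, hyv⟩, ⟨x, hxB⟩⟩, ?_, ?_⟩
  · intro u
    by_cases h : R u
    · exact Or.inl (Or.inr h)
    · exact Or.inr (Or.inr h)
  · rintro u (rfl | hu) (h2 | h2)
    · rfl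
    · rfl
    · exact h2
    · exact absurd hu h2

lemma univ_block_parts (hG : G.Connected)
    (hno : ∀ v x y : V, x ≠ v → y ≠ v → ∃ w : G.Walk x y, v ∉ w.support) :
    (G.induce Set.univ).Connected ∧ NoCutOn (G.induce Set.univ) := by
  constructor
  · exact iso_connected (induceUnivIso G).symm hG
  · intro v x y hx hy
    obtain ⟨w, hw⟩ := hno ↑v ↑x ↑y (fun hh => hx (Subtype.ext hh)) (fun hh => hy (Subtype.ext hh))
    obtain ⟨w', hw'⟩ := lift_walk (induce_adj_iff G Set.univ) w (Set.mem_univ _) (Set.mem_univ _)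
      (fun u _ => Set.mem_univ u)
    refine ⟨w'.copy (Subtype.ext rfl) (Subtype.ext rfl), ?_⟩
    rw [SimpleGraph.Walk.support_copy]
    intro hv
    apply hw
    rw [← hw']
    exact (congrArg ((v : V) ∈ ·) (SimpleGraph.Walk.support_map _ w')).mpr (List.mem_map_of_mem (f := _) hv)

lemma side_card [Fintype V] {v : V} {S : Set V} [Fintype ↥S] (hS : Side G v S) {n : ℕ}
    (h : Fintype.card V ≤ n + 1) : Fintype.card ↥S ≤ n := by
  obtain ⟨t, ht⟩ := hS.ne_univ
  have : Fintype.card ↥S < Fintype.card V :=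
    Fintype.card_lt_of_injective_of_notMem Subtype.val Subtype.val_injective
      (by rwa [Subtype.range_coe])
  omega

end cut

section main

lemma main_forward : ∀ (n : ℕ) {V : Type*} [Fintype V] (G : SimpleGraph V),
    Fintype.card V ≤ n → G.Connected → Spanner G →
    ∀ B : Set V, IsBlock G B → Spanner (G.induce B) := by
  intro n
  induction n with
  | zero =>
    intro V _ G hcard hG _ B _
    exact ((Fintype.card_eq_zero_iff.1 (Nat.le_zero.1 hcard)).false hG.nonempty.some).elim
  | succ n ih =>
    intro V _ G hcard hG hsp B hB
    by_cases hcut : ∃ v x y : V, x ≠ v ∧ y ≠ v ∧ ∀ w : G.Walk x y, v ∈ w.support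
    · obtain ⟨v, x, y, hxv, hyv, hcutw⟩ := hcut
      obtain ⟨A, Bst, hA, hBst, hcover, hinter⟩ := sides_of_cut hG hxv hyv hcutw
      have hsubcase : B ⊆ A ∨ B ⊆ Bst := by
        by_cases hBA : ∃ b ∈ B, b ∉ A
        · right
          intro u hu
          by_contra huB
          have huA : u ∈ A := (hcover u).resolve_right huB
          have huv : u ≠ v := fun h => huB (h ▸ hBst.hv)
          obtain ⟨b, hbB, hbA⟩ := hBA
          exact hA.block_avoid hB.1 hB.2.1 hu hbB huA huv hbA
        · left
          push_neg at hBA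
          exact hBA
      have key : ∀ (S : Set V), Side G v S → B ⊆ S → Spanner (G.induce B) := by
        intro S hS hsub
        haveI : Fintype ↥S := (Set.toFinite S).fintype
        have hblock := block_down hS hsub hB
        have hspS := spanner_restrict hS hG hsp
        have h1 := ih (G.induce S) (side_card hS hcard) hS.conn hspS _ hblock
        have himg : Subtype.val '' (Subtype.val ⁻¹' B : Set ↥S) = B := image_preimage hsub
        have h2 := iso_spanner (induceInduce G S _) h1
        rwa [himg] at h2
      rcases hsubcase with hsub | hsub
      · exact key A hA hsub
      · exact key Bst hBst hsub
    · push_neg at hcut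
      have huniv := univ_block_parts hG hcut
      have hBuniv : Set.univ = B := hB.2.2 Set.univ (Set.subset_univ B) huniv
      rw [← hBuniv]
      exact iso_spanner (induceUnivIso G).symm hsp

lemma main_reverse : ∀ (n : ℕ) {V : Type*} [Fintype V] (G : SimpleGraph V),
    Fintype.card V ≤ n → G.Connected →
    (∀ B : Set V, IsBlock G B → Spanner (G.induce B)) → Spanner G := by
  intro n
  induction n with
  | zero =>
    intro V _ G hcard hG _
    exact ((Fintype.card_eq_zero_iff.1 (Nat.le_zero.1 hcard)).false hG.nonempty.some).elim
  | succ n ih =>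
    intro V _ G hcard hG hbl
    by_cases hcut : ∃ v x y : V, x ≠ v ∧ y ≠ v ∧ ∀ w : G.Walk x y, v ∈ w.support
    · obtain ⟨v, x, y, hxv, hyv, hcutw⟩ := hcut
      obtain ⟨A, Bst, hA, hBst, hcover, hinter⟩ := sides_of_cut hG hxv hyv hcutw
      have key : ∀ (S : Set V), Side G v S → Spanner (G.induce S) := by
        intro S hS
        haveI : Fintype ↥S := (Set.toFinite S).fintype
        apply ih (G.induce S) (side_card hS hcard) hS.conn
        intro s hs
        have h1 := hbl _ (block_up hS hs)
        exact iso_spanner (induceInduce G S s).symm h1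
      exact glue hA hBst hcover hinter hG (key A hA) (key Bst hBst)
    · push_neg at hcut
      have huniv := univ_block_parts hG hcut
      have h1 := hbl Set.univ ⟨huniv.1, huniv.2, fun B' h _ => Set.univ_subset_iff.1 h⟩
      exact iso_spanner (induceUnivIso G) h1

end main

end Spanner13

/-- A graph admits a tree 3-spanner iff every block of it admits a tree 3-spanner. A block is
a maximal set of vertices inducing a connected subgraph with no cut-vertex. -/
theorem stmt_13 {V : Type*} [Fintype V] (G : SimpleGraph V) (hG : G.Connected) :
    (∃ T : SimpleGraph V, T ≤ G ∧ T.IsTree ∧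
        ∀ x y : V, T.dist x y ≤ 3 * G.dist x y) ↔
    (∀ B : Set V,
      ((G.induce B).Connected ∧
        (∀ v x y : B, x ≠ v → y ≠ v →
          ∃ p : (G.induce B).Walk x y, v ∉ p.support) ∧
        (∀ B' : Set V, B ⊆ B' →
          ((G.induce B').Connected ∧
            ∀ v x y : B', x ≠ v → y ≠ v →
              ∃ p : (G.induce B').Walk x y, v ∉ p.support) → B' = B)) →
      ∃ T : SimpleGraph B, T ≤ G.induce B ∧ T.IsTree ∧
        ∀ x y : B, T.dist x y ≤ 3 * (G.induce B).dist x y) := by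
  constructor
  · intro h B hB
    exact Spanner13.main_forward (Fintype.card V) G le_rfl hG h B hB
  · intro h
    exact Spanner13.main_reverse (Fintype.card V) G le_rfl hG h
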